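/- Let $\kappa \ge 1$, $0 < q < 1$, $p_a = q^a(1-q)/(1-q^{\kappa+1})$ for $0 \le a \le \kappa$, and $z_a = q^{-a(\kappa+1-a)/2}$ for $0 \le a \le \kappa+1$. Then the equation of state holds: for each $1 \le a \le \kappa$, $z_a \frac{\partial}{\partial z_a} \log\Big(\sum_{b=0}^{\kappa} \frac{z_{b+1}}{z_b}\Big) = \delta_{a,1} - \sum_{b=1}^{\kappa} C_{ab}\,(p_b + p_{b+1} + \cdots + p_\kappa)$, where the left side means: treating $F(z_1,\dots,z_\kappa) = \log\big(\sum_{b=0}^\kappa z_{b+1}/z_b\big)$ with $z_0 = z_{\kappa+1} = 1$ as a function of independent positive variables, evaluate $z_a \partial F/\partial z_a$ at the specialization $z_c = q^{-c(\kappa+1-c)/2}$. -/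

import Mathlib

/-- Principal specialization `z_a = q^{-a(κ+1-a)/2}` (note `z_0 = z_{κ+1} = 1`). -/
noncomputable def zstar (κ : ℕ) (q : ℝ) (c : ℕ) : ℝ :=
  Real.rpow q (-((c:ℝ) * ((κ:ℝ) + 1 - (c:ℝ))) / 2)

/-- Cartan matrix of `sl_{κ+1}`. -/
def cartan (a b : ℕ) : ℝ :=
  (if a = b then 2 else 0) - (if a + 1 = b then 1 else 0) - (if a = b + 1 then 1 else 0)

theorem stmt19 (κ : ℕ) (hκ : 1 ≤ κ) (q : ℝ) (hq0 : 0 < q) (hq1 : q < 1)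
    (a : ℕ) (ha1 : 1 ≤ a) (ha2 : a ≤ κ) :
    zstar κ q a * deriv (fun t : ℝ =>
        Real.log (∑ b ∈ Finset.range (κ+1),
          (if b + 1 = a then t else zstar κ q (b+1)) /
          (if b = a then t else zstar κ q b)))
      (zstar κ q a)
    = (if a = 1 then (1:ℝ) else 0) -
        ∑ b ∈ Finset.Icc 1 κ, cartan a b *
          ∑ c ∈ Finset.Icc b κ, q ^ c * (1-q) / (1 - q ^ (κ+1)) := by
  obtain ⟨m, rfl⟩ : ∃ m, a = m + 1 := ⟨a - 1, by omega⟩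
  have hq0' : (q:ℝ) ≠ 0 := ne_of_gt hq0
  have hq1' : q ≠ 1 := ne_of_lt hq1
  have hw : ∀ c, 0 < zstar κ q c := fun c => Real.rpow_pos_of_pos hq0 _
  have hQ1 : q ^ (κ+1) < 1 := pow_lt_one₀ hq0.le hq1 (Nat.succ_ne_zero κ)
  have hD : (0:ℝ) < 1 - q^(κ+1) := by linarith
  have hDne : (1:ℝ) - q^(κ+1) ≠ 0 := ne_of_gt hD
  have hq1pos : (0:ℝ) < 1 - q := by linarith
  have hq2ne : (1:ℝ) - q ^ 2 ≠ 0 := sub_ne_zero.mpr (show (q:ℝ) ^ 2 < 1 by nlinarith).ne'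
  have hq1ne : (1:ℝ) - q ≠ 0 := ne_of_gt hq1pos
  -- ratio of consecutive zstar's
  have hratio : ∀ b : ℕ, zstar κ q (b+1) / zstar κ q b
      = q ^ b * Real.rpow q (-(κ:ℝ)/2) := by
    intro b
    unfold zstar
    have e1 : ∀ x y : ℝ, Real.rpow q x / Real.rpow q y = Real.rpow q (x - y) :=
      fun x y => (Real.rpow_sub hq0 x y).symm
    have e2 : ∀ x y : ℝ, Real.rpow q (x + y) = Real.rpow q x * Real.rpow q y :=
      fun x y => Real.rpow_add hq0 x y
    have e3 : Real.rpow q (b : ℝ) = q ^ b := Real.rpow_natCast q b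
    rw [e1, show (-((((b:ℕ)+1 : ℕ):ℝ) * ((κ:ℝ) + 1 - (((b:ℕ)+1 : ℕ):ℝ))) / 2
        - -((b:ℝ) * ((κ:ℝ) + 1 - (b:ℝ))) / 2) = (b:ℝ) + (-(κ:ℝ)/2) from by
      push_cast; ring, e2, e3]
  set Q : ℝ := Real.rpow q (-(κ:ℝ)/2) with hQdef
  have hQpos : 0 < Q := Real.rpow_pos_of_pos hq0 _
  set C : ℝ := ∑ b ∈ ((Finset.range (κ+1)).erase (m+1)).erase m,
      zstar κ q (b+1) / zstar κ q b with hC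
  have hmem1 : m + 1 ∈ Finset.range (κ+1) := by simp; omega
  have hmem2 : m ∈ (Finset.range (κ+1)).erase (m+1) := by
    simp [Finset.mem_erase]; omega
  have hsplit : ∀ t : ℝ,
      (∑ b ∈ Finset.range (κ+1),
        (if b + 1 = m + 1 then t else zstar κ q (b+1)) /
        (if b = m + 1 then t else zstar κ q b))
      = C + t * (zstar κ q m)⁻¹ + zstar κ q (m+2) * t⁻¹ := by
    intro t
    rw [← Finset.add_sum_erase _ _ hmem1, ← Finset.add_sum_erase _ _ hmem2]
    have e1 : (if (m+1) + 1 = m + 1 then t else zstar κ q (m+1+1)) /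
        (if m + 1 = m + 1 then t else zstar κ q (m+1)) = zstar κ q (m+2) * t⁻¹ := by
      rw [if_neg (by omega), if_pos rfl, div_eq_mul_inv]
    have e2 : (if m + 1 = m + 1 then t else zstar κ q (m+1)) /
        (if m = m + 1 then t else zstar κ q m) = t * (zstar κ q m)⁻¹ := by
      rw [if_pos rfl, if_neg (by omega), div_eq_mul_inv]
    have e3 : ∀ b ∈ ((Finset.range (κ+1)).erase (m+1)).erase m,
        (if b + 1 = m + 1 then t else zstar κ q (b+1)) /
        (if b = m + 1 then t else zstar κ q b) = zstar κ q (b+1) / zstar κ q b := by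
      intro b hb
      simp only [Finset.mem_erase] at hb
      rw [if_neg (by omega), if_neg (by omega)]
    rw [e1, e2, Finset.sum_congr rfl e3]
    ring
  have hzpos : 0 < zstar κ q (m+1) := hw _
  have hzne : zstar κ q (m+1) ≠ 0 := ne_of_gt hzpos
  have hSval : C + zstar κ q (m+1) * (zstar κ q m)⁻¹ + zstar κ q (m+2) * (zstar κ q (m+1))⁻¹
      = Q * ∑ b ∈ Finset.range (κ+1), q ^ b := by
    rw [← hsplit (zstar κ q (m+1)), Finset.mul_sum]
    refine Finset.sum_congr rfl fun b hb => ?_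
    have e : (if b + 1 = m + 1 then zstar κ q (m+1) else zstar κ q (b+1)) /
        (if b = m + 1 then zstar κ q (m+1) else zstar κ q b)
        = zstar κ q (b+1) / zstar κ q b := by
      by_cases h1 : b + 1 = m + 1
      · rw [if_pos h1, if_neg (by omega), ← h1]
      · rw [if_neg h1]
        by_cases h2 : b = m + 1
        · rw [if_pos h2, ← h2]
        · rw [if_neg h2]
    rw [e, hratio]
    ring
  have hG : (∑ b ∈ Finset.range (κ+1), q ^ b) = (1 - q^(κ+1))/(1-q) := by
    rw [geom_sum_eq hq1']
    rw [div_eq_div_iff (sub_ne_zero.mpr hq1') hq1ne]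
    ring
  have hSpos : 0 < C + zstar κ q (m+1) * (zstar κ q m)⁻¹
      + zstar κ q (m+2) * (zstar κ q (m+1))⁻¹ := by
    rw [hSval]
    refine mul_pos hQpos (Finset.sum_pos (fun i _ => pow_pos hq0 i) ⟨0, by simp⟩)
  -- derivative
  have hinner : HasDerivAt (fun t : ℝ => C + t * (zstar κ q m)⁻¹ + zstar κ q (m+2) * t⁻¹)
      ((zstar κ q m)⁻¹ + zstar κ q (m+2) * (-(zstar κ q (m+1)^2)⁻¹)) (zstar κ q (m+1)) := by
    have h1 : HasDerivAt (fun t : ℝ => t * (zstar κ q m)⁻¹) (zstar κ q m)⁻¹ (zstar κ q (m+1)) := by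
      simpa using (hasDerivAt_id (zstar κ q (m+1))).mul_const (zstar κ q m)⁻¹
    have h2 : HasDerivAt (fun t : ℝ => zstar κ q (m+2) * t⁻¹)
        (zstar κ q (m+2) * (-(zstar κ q (m+1)^2)⁻¹)) (zstar κ q (m+1)) :=
      (hasDerivAt_inv hzne).const_mul (zstar κ q (m+2))
    exact (((hasDerivAt_const (zstar κ q (m+1)) C).add h1).add h2).congr_deriv (by ring)
  have hlog : HasDerivAt (fun t : ℝ => Real.log (C + t * (zstar κ q m)⁻¹ + zstar κ q (m+2) * t⁻¹))
      (((zstar κ q m)⁻¹ + zstar κ q (m+2) * (-(zstar κ q (m+1)^2)⁻¹)) /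
        (C + zstar κ q (m+1) * (zstar κ q m)⁻¹ + zstar κ q (m+2) * (zstar κ q (m+1))⁻¹))
      (zstar κ q (m+1)) := hinner.log (ne_of_gt hSpos)
  have hdeq : deriv (fun t : ℝ =>
        Real.log (∑ b ∈ Finset.range (κ+1),
          (if b + 1 = m + 1 then t else zstar κ q (b+1)) /
          (if b = m + 1 then t else zstar κ q b))) (zstar κ q (m+1))
      = ((zstar κ q m)⁻¹ + zstar κ q (m+2) * (-(zstar κ q (m+1)^2)⁻¹)) /
        (C + zstar κ q (m+1) * (zstar κ q m)⁻¹ + zstar κ q (m+2) * (zstar κ q (m+1))⁻¹) := by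
    have e : (fun t : ℝ =>
        Real.log (∑ b ∈ Finset.range (κ+1),
          (if b + 1 = m + 1 then t else zstar κ q (b+1)) /
          (if b = m + 1 then t else zstar κ q b)))
        = fun t : ℝ => Real.log (C + t * (zstar κ q m)⁻¹ + zstar κ q (m+2) * t⁻¹) := by
      funext t; rw [hsplit t]
    rw [e]
    exact hlog.deriv
  -- LHS value
  have hnum : zstar κ q (m+1) * ((zstar κ q m)⁻¹ + zstar κ q (m+2) * (-(zstar κ q (m+1)^2)⁻¹))
      = (q^m - q^(m+1)) * Q := by
    have r1 := hratio m
    have r2 := hratio (m+1)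
    have hmne : zstar κ q m ≠ 0 := ne_of_gt (hw m)
    have : zstar κ q (m+1) * ((zstar κ q m)⁻¹ + zstar κ q (m+2) * (-(zstar κ q (m+1)^2)⁻¹))
        = zstar κ q (m+1) / zstar κ q m - zstar κ q (m+1+1) / zstar κ q (m+1) := by
      field_simp
      ring
    rw [this, r1, r2]
    ring
  have hLHS : zstar κ q (m+1) * deriv (fun t : ℝ =>
        Real.log (∑ b ∈ Finset.range (κ+1),
          (if b + 1 = m + 1 then t else zstar κ q (b+1)) /
          (if b = m + 1 then t else zstar κ q b))) (zstar κ q (m+1))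
      = (q^m - q^(m+1)) * (1-q) / (1 - q^(κ+1)) := by
    rw [hdeq, ← mul_div_assoc, hnum, hSval, hG, mul_comm Q ((1 - q^(κ+1))/(1-q)),
      mul_div_mul_right _ _ (ne_of_gt hQpos), div_div_eq_mul_div]
  rw [hLHS]
  -- RHS computation
  have hT : ∀ b : ℕ, b ≤ κ + 1 →
      (∑ c ∈ Finset.Icc b κ, q ^ c * (1-q) / (1 - q ^ (κ+1)))
      = (q^b - q^(κ+1)) / (1 - q^(κ+1)) := by
    intro b hb
    have hq1ne' : q - 1 ≠ 0 := sub_ne_zero.mpr hq1'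
    rw [← Finset.sum_div, ← Finset.sum_mul, ← Finset.Ico_add_one_right_eq_Icc, geom_sum_Ico hq1' hb]
    field_simp
    ring
  have hTin : ∀ b ∈ Finset.Icc 1 κ, cartan (m+1) b *
      (∑ c ∈ Finset.Icc b κ, q ^ c * (1-q) / (1 - q ^ (κ+1)))
      = (if m+1 = b then 2 * ((q^b - q^(κ+1)) / (1 - q^(κ+1))) else 0)
        - (if m+1+1 = b then (q^b - q^(κ+1)) / (1 - q^(κ+1)) else 0)
        - (if m = b then (q^b - q^(κ+1)) / (1 - q^(κ+1)) else 0) := by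
    intro b hb
    simp only [Finset.mem_Icc] at hb
    rw [hT b (by omega)]
    have hiff : (m + 1 = b + 1) ↔ (m = b) := by omega
    unfold cartan
    simp only [hiff]
    split_ifs <;> ring
  rw [Finset.sum_congr rfl hTin, Finset.sum_sub_distrib, Finset.sum_sub_distrib,
    Finset.sum_ite_eq, Finset.sum_ite_eq, Finset.sum_ite_eq,
    if_pos (show m + 1 ∈ Finset.Icc 1 κ from Finset.mem_Icc.mpr ⟨by omega, by omega⟩)]
  have hmem3 : (m + 1 + 1 ∈ Finset.Icc 1 κ) ↔ m + 2 ≤ κ := by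
    simp only [Finset.mem_Icc]; omega
  have hmem4 : (m ∈ Finset.Icc 1 κ) ↔ 1 ≤ m := by
    simp only [Finset.mem_Icc]; omega
  simp only [hmem3, hmem4]
  split_ifs with h1 h2 h3 <;>
    first
      | (exfalso; omega)
      | (try simp only [show κ = m + 1 from by omega]
         try simp only [show m = 0 from by omega]
         field_simp
         ring)
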